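/- Let G(w) = E(p+w) − E(w) − E(p) with p ≠ 0. For α > 0 and q ⊥ p with q ≠ 0, the directional derivative of G at w = αp + q in the direction q satisfies q·∇G(w) = |q|^2 [E'(|p+w|)/|p+w| − E'(|w|)/|w|] < 0, where E'(r)/r is the strictly decreasing function (κ1+2κ2 r^2)/E(r). -/

import Mathlib

noncomputable def Edisp (κ1 κ2 : ℝ) (p : EuclideanSpace ℝ (Fin 3)) : ℝ :=
  Real.sqrt (κ1 * ‖p‖ ^ 2 + κ2 * ‖p‖ ^ 4)

lemma hasDerivAt_edisp (κ1 κ2 : ℝ) (hκ1 : 0 < κ1) (hκ2 : 0 < κ2)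
    (v q : EuclideanSpace ℝ (Fin 3)) (hv : v ≠ 0) :
    HasDerivAt (fun t : ℝ => Edisp κ1 κ2 (v + t • q))
      ((inner ℝ v q : ℝ) * (κ1 + 2 * κ2 * ‖v‖ ^ 2) / Edisp κ1 κ2 v) 0 := by
  have hg : HasDerivAt (fun t : ℝ => ‖v‖ ^ 2 + 2 * (inner ℝ v q : ℝ) * t + ‖q‖ ^ 2 * t ^ 2)
      (2 * (inner ℝ v q : ℝ)) 0 := by
    have h1 : HasDerivAt (fun t : ℝ => 2 * (inner ℝ v q : ℝ) * t) (2 * (inner ℝ v q : ℝ)) 0 := by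
      simpa using (hasDerivAt_id (0 : ℝ)).const_mul (2 * (inner ℝ v q : ℝ))
    have h2 : HasDerivAt (fun t : ℝ => ‖q‖ ^ 2 * t ^ 2) (‖q‖ ^ 2 * (2 * 0 ^ 1)) 0 :=
      (hasDerivAt_pow 2 (0 : ℝ)).const_mul _
    exact ((h1.const_add (‖v‖ ^ 2)).add h2).congr_deriv (by simp)
  have hg' : HasDerivAt (fun t : ℝ => ‖v + t • q‖ ^ 2) (2 * (inner ℝ v q : ℝ)) 0 := by
    convert hg using 2 with t
    rw [norm_add_sq_real, real_inner_smul_right, norm_smul]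
    simp [mul_pow]
    ring
  have hvn : 0 < ‖v‖ := norm_pos_iff.mpr hv
  have hcpos : 0 < κ1 * ‖v‖ ^ 2 + κ2 * (‖v‖ ^ 2) ^ 2 := by positivity
  have hu : HasDerivAt (fun t : ℝ => κ1 * ‖v + t • q‖ ^ 2 + κ2 * (‖v + t • q‖ ^ 2) ^ 2)
      (κ1 * (2 * (inner ℝ v q : ℝ)) +
        κ2 * (2 * (‖v + (0 : ℝ) • q‖ ^ 2) ^ 1 * (2 * (inner ℝ v q : ℝ)))) 0 :=
    (hg'.const_mul κ1).add ((hg'.pow 2).const_mul κ2)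
  simp only [zero_smul, add_zero] at hu
  have hs := hu.sqrt (by simpa using hcpos.ne')
  have heq : (fun t : ℝ => Edisp κ1 κ2 (v + t • q)) =
      fun t : ℝ => Real.sqrt (κ1 * ‖v + t • q‖ ^ 2 + κ2 * (‖v + t • q‖ ^ 2) ^ 2) := by
    funext t; unfold Edisp; congr 1; ring
  rw [heq]
  convert hs using 1
  have hE : Edisp κ1 κ2 v = Real.sqrt (κ1 * ‖v‖ ^ 2 + κ2 * (‖v‖ ^ 2) ^ 2) := by
    unfold Edisp; congr 1; ring
  rw [hE]
  have hsq : Real.sqrt (κ1 * ‖v‖ ^ 2 + κ2 * (‖v‖ ^ 2) ^ 2) ≠ 0 :=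
    (Real.sqrt_pos.mpr hcpos).ne'
  field_simp
  simp only [zero_smul, add_zero]

lemma key_ineq (κ1 κ2 : ℝ) (hκ1 : 0 < κ1) (hκ2 : 0 < κ2) {a b : ℝ}
    (ha : 0 < a) (hab : a < b) :
    (κ1 + 2 * κ2 * b) / Real.sqrt (κ1 * b + κ2 * b ^ 2)
      < (κ1 + 2 * κ2 * a) / Real.sqrt (κ1 * a + κ2 * a ^ 2) := by
  have hb : 0 < b := ha.trans hab
  have hA : 0 < κ1 * a + κ2 * a ^ 2 := by positivity
  have hB : 0 < κ1 * b + κ2 * b ^ 2 := by positivity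
  have hsa : 0 < Real.sqrt (κ1 * a + κ2 * a ^ 2) := Real.sqrt_pos.mpr hA
  have hsb : 0 < Real.sqrt (κ1 * b + κ2 * b ^ 2) := Real.sqrt_pos.mpr hB
  rw [div_lt_div_iff₀ hsb hsa]
  have hsq : ((κ1 + 2 * κ2 * b) * Real.sqrt (κ1 * a + κ2 * a ^ 2)) ^ 2
      < ((κ1 + 2 * κ2 * a) * Real.sqrt (κ1 * b + κ2 * b ^ 2)) ^ 2 := by
    rw [mul_pow, mul_pow, Real.sq_sqrt hA.le, Real.sq_sqrt hB.le]
    have hid : (κ1 + 2 * κ2 * a) ^ 2 * (κ1 * b + κ2 * b ^ 2)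
        - (κ1 + 2 * κ2 * b) ^ 2 * (κ1 * a + κ2 * a ^ 2)
        = κ1 ^ 2 * (b - a) * (κ1 + κ2 * (a + b)) := by ring
    nlinarith [mul_pos (mul_pos (mul_pos hκ1 hκ1) (sub_pos.mpr hab))
      (show (0:ℝ) < κ1 + κ2 * (a + b) by positivity)]
  have h1 : 0 ≤ (κ1 + 2 * κ2 * b) * Real.sqrt (κ1 * a + κ2 * a ^ 2) := by positivity
  exact (pow_lt_pow_iff_left₀ h1 (by positivity) (by norm_num)).mp hsq

theorem directional_derivative_neg (κ1 κ2 : ℝ) (hκ1 : 0 < κ1) (hκ2 : 0 < κ2)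
    (p q : EuclideanSpace ℝ (Fin 3)) (hp : p ≠ 0) (hq : q ≠ 0)
    (hperp : (inner ℝ q p : ℝ) = 0) (α : ℝ) (hα : 0 < α) :
    HasDerivAt
      (fun t : ℝ =>
        Edisp κ1 κ2 (p + (α • p + q + t • q)) - Edisp κ1 κ2 (α • p + q + t • q)
          - Edisp κ1 κ2 p)
      (‖q‖ ^ 2 *
        ((κ1 + 2 * κ2 * ‖p + (α • p + q)‖ ^ 2) / Edisp κ1 κ2 (p + (α • p + q)) -
          (κ1 + 2 * κ2 * ‖α • p + q‖ ^ 2) / Edisp κ1 κ2 (α • p + q))) 0 ∧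
    ‖q‖ ^ 2 *
        ((κ1 + 2 * κ2 * ‖p + (α • p + q)‖ ^ 2) / Edisp κ1 κ2 (p + (α • p + q)) -
          (κ1 + 2 * κ2 * ‖α • p + q‖ ^ 2) / Edisp κ1 κ2 (α • p + q)) < 0 := by
  have hqp : (inner ℝ p q : ℝ) = 0 := by rw [real_inner_comm]; exact hperp
  have hqnorm : 0 < ‖q‖ := norm_pos_iff.mpr hq
  have hpnorm : 0 < ‖p‖ := norm_pos_iff.mpr hp
  have hi2 : (inner ℝ (α • p + q) q : ℝ) = ‖q‖ ^ 2 := by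
    rw [inner_add_left, real_inner_smul_left, hqp, real_inner_self_eq_norm_sq]
    ring
  have hi1 : (inner ℝ (p + (α • p + q)) q : ℝ) = ‖q‖ ^ 2 := by
    rw [inner_add_left, hqp, hi2]; ring
  have hv₂ne : (α • p + q) ≠ 0 := by
    intro h
    have h0 : (inner ℝ (α • p + q) q : ℝ) = 0 := by rw [h]; simp
    rw [hi2] at h0
    exact (pow_ne_zero 2 hqnorm.ne') h0
  have hv₁ne : (p + (α • p + q)) ≠ 0 := by
    intro h
    have h0 : (inner ℝ (p + (α • p + q)) q : ℝ) = 0 := by rw [h]; simp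
    rw [hi1] at h0
    exact (pow_ne_zero 2 hqnorm.ne') h0
  have hd1 := hasDerivAt_edisp κ1 κ2 hκ1 hκ2 (p + (α • p + q)) q hv₁ne
  have hd2 := hasDerivAt_edisp κ1 κ2 hκ1 hκ2 (α • p + q) q hv₂ne
  rw [hi1] at hd1
  rw [hi2] at hd2
  have hnormlt : ‖α • p + q‖ ^ 2 < ‖p + (α • p + q)‖ ^ 2 := by
    rw [norm_add_sq_real p (α • p + q), inner_add_right, real_inner_smul_right, hqp,
      real_inner_self_eq_norm_sq]
    nlinarith [mul_pos hα (mul_pos hpnorm hpnorm)]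
  have hv₂norm : 0 < ‖α • p + q‖ := norm_pos_iff.mpr hv₂ne
  constructor
  · have hcomb := (hd1.sub hd2).sub_const (Edisp κ1 κ2 p)
    have hfun : (fun t : ℝ =>
        Edisp κ1 κ2 (p + (α • p + q + t • q)) - Edisp κ1 κ2 (α • p + q + t • q)
          - Edisp κ1 κ2 p) =
        (fun t : ℝ =>
          Edisp κ1 κ2 ((p + (α • p + q)) + t • q) - Edisp κ1 κ2 ((α • p + q) + t • q)
            - Edisp κ1 κ2 p) := by
      funext t
      rw [← add_assoc]
    rw [hfun]
    convert hcomb using 1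
    · rfl
    · rfl
    · rfl
    · ring
  · have hkey := key_ineq κ1 κ2 hκ1 hκ2 (a := ‖α • p + q‖ ^ 2) (b := ‖p + (α • p + q)‖ ^ 2)
      (by positivity) hnormlt
    have hE1 : Edisp κ1 κ2 (p + (α • p + q)) =
        Real.sqrt (κ1 * ‖p + (α • p + q)‖ ^ 2 + κ2 * (‖p + (α • p + q)‖ ^ 2) ^ 2) := by
      unfold Edisp; congr 1; ring
    have hE2 : Edisp κ1 κ2 (α • p + q) =
        Real.sqrt (κ1 * ‖α • p + q‖ ^ 2 + κ2 * (‖α • p + q‖ ^ 2) ^ 2) := by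
      unfold Edisp; congr 1; ring
    rw [hE1, hE2]
    apply mul_neg_of_pos_of_neg (by positivity)
    linarith
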